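/- Let B be the unit ball of a norm on ℝ² and x a point of its boundary. Then x admits an inner ellipse (an ellipse centered at the origin contained in B with x on its boundary) if and only if there exists a closed Euclidean disc D (not necessarily centered at the origin) with x ∈ ∂D and D ⊆ B. -/

import Mathlib

open scoped RealInnerProductSpace

private abbrev E2 := EuclideanSpace ℝ (Fin 2)

private theorem aux_ellipse (N : E2 → ℝ)
    (hNs : ∀ (c : ℝ) v, N (c • v) = |c| * N v)
    (hNt : ∀ v w, N (v + w) ≤ N v + N w)
    (x c : E2) (ρ : ℝ) (hρ : 0 < ρ)
    (hD : Metric.closedBall c ρ ⊆ {v | N v ≤ 1})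
    (s₀ : ℝ) (hs : |s₀| ≤ 1) (hxd : ‖x - s₀ • c‖ = ρ)
    (hden : s₀ * ⟪ρ⁻¹ • (x - s₀ • c), c⟫ + ρ ≠ 0) :
    ∃ B : LinearMap.BilinForm ℝ E2,
      (∀ z w, B z w = B w z) ∧ (∀ z, z ≠ 0 → 0 < B z z) ∧
      {v | B v v ≤ 1} ⊆ {v | N v ≤ 1} ∧ B x x = 1 := by
  have hρ' : (ρ:ℝ) ≠ 0 := hρ.ne'
  set u₀ : E2 := ρ⁻¹ • (x - s₀ • c) with hu₀
  set dd : ℝ := s₀ * ⟪u₀, c⟫ + ρ with hdd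
  set γ : ℝ := s₀ / dd with hγ
  have hu₀n : ‖u₀‖ = 1 := by
    rw [hu₀, norm_smul, hxd, norm_inv, Real.norm_eq_abs, abs_of_pos hρ, inv_mul_cancel₀ hρ']
  have hiu : ⟪u₀, u₀⟫ = 1 := by rw [real_inner_self_eq_norm_sq, hu₀n, one_pow]
  have hxu : x = s₀ • c + ρ • u₀ := by rw [hu₀, smul_inv_smul₀ hρ']; abel
  have hγdd : γ * dd = s₀ := by rw [hγ]; field_simp
  have h1γ : 1 - γ * ⟪u₀, c⟫ = ρ / dd := by
    have h0 : γ * ⟪u₀, c⟫ = (s₀ * ⟪u₀, c⟫) / dd := by rw [hγ]; ring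
    rw [h0, eq_div_iff hden, sub_mul, one_mul, div_mul_cancel₀ _ hden, hdd]
    ring
  let M : E2 →ₗ[ℝ] E2 :=
    { toFun := fun v => ρ⁻¹ • (v - (γ * ⟪u₀, v⟫) • c)
      map_add' := by
        intro v w
        simp only [inner_add_right]
        module
      map_smul' := by
        intro t v
        simp only [real_inner_smul_right, RingHom.id_apply]
        module }
  have hM : ∀ v, M v = ρ⁻¹ • (v - (γ * ⟪u₀, v⟫) • c) := fun v => rfl
  have hux : ⟪u₀, x⟫ = dd := by
    conv_lhs => rw [hxu]
    rw [inner_add_right, real_inner_smul_right, real_inner_smul_right, hiu, hdd]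
    ring
  have hMx : M x = u₀ := by
    rw [hM, hux, hγdd, hu₀]
  have hMinj : ∀ z, M z = 0 → z = 0 := by
    intro z hz
    rw [hM] at hz
    have hz2 : z = (γ * ⟪u₀, z⟫) • c := by
      have h := (smul_eq_zero.mp hz).resolve_left (inv_ne_zero hρ')
      exact sub_eq_zero.mp h
    have h3 : ⟪u₀, z⟫ = (γ * ⟪u₀, z⟫) * ⟪u₀, c⟫ := by
      conv_lhs => rw [hz2]
      rw [real_inner_smul_right]
    have h4 : ⟪u₀, z⟫ * (1 - γ * ⟪u₀, c⟫) = 0 := by linear_combination h3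
    have h5 : ⟪u₀, z⟫ * (ρ / dd) = 0 := by rwa [h1γ] at h4
    have h6 : ⟪u₀, z⟫ = 0 := by
      rcases mul_eq_zero.mp h5 with h | h
      · exact h
      · exact absurd h (div_ne_zero hρ' hden)
    rw [hz2, h6, mul_zero, zero_smul]
  refine ⟨LinearMap.mk₂ ℝ (fun v w => ⟪M v, M w⟫)
      (fun m m' n => by simp only [map_add, inner_add_left])
      (fun t m n => by simp only [map_smul, real_inner_smul_left, smul_eq_mul])
      (fun m n n' => by simp only [map_add, inner_add_right])
      (fun t m n => by simp only [map_smul, real_inner_smul_right, smul_eq_mul]), ?_, ?_, ?_, ?_⟩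
  · intro z w
    simp only [LinearMap.mk₂_apply]
    exact real_inner_comm _ _
  · intro z hz
    simp only [LinearMap.mk₂_apply]
    have hz' : M z ≠ 0 := fun h => hz (hMinj z h)
    rw [real_inner_self_eq_norm_sq]
    exact pow_pos (norm_pos_iff.mpr hz') 2
  · intro v hv
    simp only [Set.mem_setOf_eq, LinearMap.mk₂_apply] at hv ⊢
    set u : E2 := M v with hu
    have hun : ‖u‖ ≤ 1 := by
      have h1 : ‖u‖^2 ≤ 1 := by rw [← real_inner_self_eq_norm_sq]; exact hv
      nlinarith [norm_nonneg u]
    have hiMv : ⟪u₀, v⟫ = dd * ⟪u₀, u⟫ := by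
      rw [hu, hM, real_inner_smul_right, inner_sub_right, real_inner_smul_right]
      rw [show ⟪u₀,v⟫ - γ * ⟪u₀,v⟫ * ⟪u₀,c⟫ = ⟪u₀,v⟫ * (1 - γ * ⟪u₀,c⟫) from by ring,
        h1γ]
      have hq : ∀ q : ℝ, dd * (ρ⁻¹ * (q * (ρ / dd))) = q := by
        intro q; field_simp
      rw [hq]
    set s : ℝ := s₀ * ⟪u₀, u⟫ with hsdef
    have hsabs : |s| ≤ 1 := by
      have h2 := abs_real_inner_le_norm u₀ u
      rw [hu₀n, one_mul] at h2
      rw [hsdef, abs_mul]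
      calc |s₀| * |⟪u₀,u⟫| ≤ 1 * 1 :=
            mul_le_mul hs (le_trans h2 hun) (abs_nonneg _) zero_le_one
        _ = 1 := one_mul 1
    have hveq : v = s • c + ρ • u := by
      have hru : ρ • u = v - (γ * ⟪u₀, v⟫) • c := by rw [hu, hM, smul_inv_smul₀ hρ']
      have hsv : s = γ * ⟪u₀, v⟫ := by
        have hq2 : ∀ q : ℝ, s₀ / dd * (dd * q) = s₀ * q := by
          intro q; field_simp
        rw [hsdef, hiMv, hγ, hq2]
      rw [hru, hsv]; abel
    set w : E2 := ρ • u with hwdef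
    have hwn : ‖w‖ ≤ ρ := by
      rw [hwdef, norm_smul, Real.norm_eq_abs, abs_of_pos hρ]
      nlinarith
    have hcw : N (c + w) ≤ 1 := by
      apply hD
      show dist (c + w) c ≤ ρ
      rw [dist_eq_norm]
      simpa using hwn
    have hcw' : N (c - w) ≤ 1 := by
      apply hD
      show dist (c - w) c ≤ ρ
      rw [dist_eq_norm]
      simpa using hwn
    have hkey : v = ((1+s)/2) • (c + w) + ((1-s)/2) • (w - c) := by
      rw [hveq]; module
    obtain ⟨hl, hr⟩ := abs_le.mp hsabs
    have hs1 : 0 ≤ (1+s)/2 := by linarith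
    have hs2 : 0 ≤ (1-s)/2 := by linarith
    have hwc : N (w - c) = N (c - w) := by
      rw [show w - c = (-1 : ℝ) • (c - w) from by module, hNs]
      norm_num
    calc N v = N (((1+s)/2) • (c + w) + ((1-s)/2) • (w - c)) := by rw [← hkey]
      _ ≤ N (((1+s)/2) • (c + w)) + N (((1-s)/2) • (w - c)) := hNt _ _
      _ = (1+s)/2 * N (c + w) + (1-s)/2 * N (w - c) := by
          rw [hNs, hNs, abs_of_nonneg hs1, abs_of_nonneg hs2]
      _ ≤ (1+s)/2 * 1 + (1-s)/2 * 1 :=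
          add_le_add (mul_le_mul_of_nonneg_left hcw hs1)
            (mul_le_mul_of_nonneg_left (hwc ▸ hcw') hs2)
      _ = 1 := by ring
  · simp only [LinearMap.mk₂_apply]
    rw [hMx, hiu]

set_option maxHeartbeats 1000000 in
/-- Let `N` be a norm on `ℝ²` with unit ball `B = {v | N v ≤ 1}` and `x ∈ ∂B` (`N x = 1`).
Then `x` admits an inner ellipse (an origin-centered ellipse contained in `B` with `x` on
its boundary) iff there is a closed Euclidean disc `D ⊆ B` with `x ∈ ∂D`. -/
theorem stmt13 (N : EuclideanSpace ℝ (Fin 2) → ℝ)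
    (hN0 : ∀ v, N v = 0 ↔ v = 0)
    (hNs : ∀ (c : ℝ) v, N (c • v) = |c| * N v)
    (hNt : ∀ v w, N (v + w) ≤ N v + N w)
    (x : EuclideanSpace ℝ (Fin 2)) (hx : N x = 1) :
    (∃ B : LinearMap.BilinForm ℝ (EuclideanSpace ℝ (Fin 2)),
        (∀ z w, B z w = B w z) ∧ (∀ z, z ≠ 0 → 0 < B z z) ∧
        {v | B v v ≤ 1} ⊆ {v | N v ≤ 1} ∧ B x x = 1) ↔
      (∃ (c : EuclideanSpace ℝ (Fin 2)) (ρ : ℝ), 0 < ρ ∧ dist x c = ρ ∧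
        Metric.closedBall c ρ ⊆ {v | N v ≤ 1}) := by
  constructor
  · -- forward direction
    rintro ⟨B, hsymm, hpos, hsub, hBx⟩
    set e0 : E2 := EuclideanSpace.single 0 1 with he0
    set e1 : E2 := EuclideanSpace.single 1 1 with he1
    have hdecomp : ∀ u : E2, u = u 0 • e0 + u 1 • e1 := by
      intro u
      ext i
      fin_cases i <;>
        simp [he0, he1, EuclideanSpace.single_apply, PiLp.add_apply, PiLp.smul_apply]
    have hcoord : ∀ u : E2, B u u =
        B e0 e0 * (u 0 * u 0) + B e0 e1 * (u 0 * u 1) +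
        B e1 e0 * (u 1 * u 0) + B e1 e1 * (u 1 * u 1) := by
      intro u
      conv_lhs => rw [hdecomp u]
      simp only [map_add, map_smul, LinearMap.add_apply, LinearMap.smul_apply, smul_eq_mul]
      ring
    have hnorm2 : ∀ u : E2, ‖u‖ ^ 2 = u 0 * u 0 + u 1 * u 1 := by
      intro u
      rw [EuclideanSpace.norm_eq, Real.sq_sqrt (Finset.sum_nonneg (fun i _ => sq_nonneg _)),
        Fin.sum_univ_two, Real.norm_eq_abs, Real.norm_eq_abs, sq_abs, sq_abs, sq, sq]
    set C : ℝ := |B e0 e0| + |B e0 e1| + |B e1 e0| + |B e1 e1| + 1 with hC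
    have hCpos : 0 < C := by positivity
    have hquad : ∀ u : E2, B u u ≤ C * ‖u‖ ^ 2 := by
      intro u
      rw [hcoord u, hnorm2 u, hC]
      nlinarith [mul_nonneg (sub_nonneg.mpr (le_abs_self (B e0 e0))) (sq_nonneg (u 0)),
        mul_nonneg (sub_nonneg.mpr (le_abs_self (B e1 e1))) (sq_nonneg (u 1)),
        mul_nonneg (abs_nonneg (B e0 e0)) (sq_nonneg (u 1)),
        mul_nonneg (abs_nonneg (B e1 e1)) (sq_nonneg (u 0)),
        mul_nonneg (sub_nonneg.mpr (le_abs_self (B e0 e1))) (sq_nonneg (u 0 + u 1)),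
        mul_nonneg (by linarith [neg_abs_le (B e0 e1)] : (0:ℝ) ≤ |B e0 e1| + B e0 e1)
          (sq_nonneg (u 0 - u 1)),
        mul_nonneg (sub_nonneg.mpr (le_abs_self (B e1 e0))) (sq_nonneg (u 0 + u 1)),
        mul_nonneg (by linarith [neg_abs_le (B e1 e0)] : (0:ℝ) ≤ |B e1 e0| + B e1 e0)
          (sq_nonneg (u 0 - u 1)),
        sq_nonneg (u 0), sq_nonneg (u 1),
        mul_nonneg (abs_nonneg (B e0 e1)) (sq_nonneg (u 0)),
        mul_nonneg (abs_nonneg (B e0 e1)) (sq_nonneg (u 1)),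
        mul_nonneg (abs_nonneg (B e1 e0)) (sq_nonneg (u 0)),
        mul_nonneg (abs_nonneg (B e1 e0)) (sq_nonneg (u 1))]
    set g : E2 := B x e0 • e0 + B x e1 • e1 with hgdef
    have hg : ∀ w : E2, ⟪g, w⟫ = B x w := by
      intro w
      conv_rhs => rw [hdecomp w]
      rw [hgdef]
      simp only [inner_add_left, real_inner_smul_left, map_add, map_smul, smul_eq_mul,
        he0, he1, EuclideanSpace.inner_single_left, starRingEnd_apply, star_trivial]
      ring
    have hgx : ⟪g, x⟫ = 1 := by rw [hg]; exact hBx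
    have hgne : g ≠ 0 := by
      intro h
      rw [h, inner_zero_left] at hgx
      norm_num at hgx
    have hG : 0 < ‖g‖ := norm_pos_iff.mpr hgne
    refine ⟨x - C⁻¹ • g, ‖g‖ / C, div_pos hG hCpos, ?_, ?_⟩
    · rw [dist_eq_norm, sub_sub_cancel, norm_smul, norm_inv, Real.norm_eq_abs,
        abs_of_pos hCpos, inv_mul_eq_div]
    · intro v hv
      apply hsub
      show B v v ≤ 1
      have hv' : ‖v - (x - C⁻¹ • g)‖ ≤ ‖g‖ / C := by
        rwa [Metric.mem_closedBall, dist_eq_norm] at hv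
      set u : E2 := v - x with hudef
      have hrw : v - (x - C⁻¹ • g) = u + C⁻¹ • g := by rw [hudef]; abel
      rw [hrw] at hv'
      have hnCg : ‖C⁻¹ • g‖ = ‖g‖ / C := by
        rw [norm_smul, norm_inv, Real.norm_eq_abs, abs_of_pos hCpos, inv_mul_eq_div]
      have hsq : ‖u + C⁻¹ • g‖ ^ 2 ≤ (‖g‖ / C) ^ 2 :=
        pow_le_pow_left₀ (norm_nonneg _) hv' 2
      have hexp : ‖u + C⁻¹ • g‖ ^ 2 = ‖u‖ ^ 2 + 2 * (C⁻¹ * ⟪u, g⟫) + (‖g‖ / C) ^ 2 := by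
        rw [norm_add_sq_real, real_inner_smul_right, hnCg]
      have hineq : ‖u‖ ^ 2 + 2 * (C⁻¹ * ⟪u, g⟫) ≤ 0 := by
        rw [hexp] at hsq; linarith
      have hkey : C * ‖u‖ ^ 2 + 2 * ⟪u, g⟫ ≤ 0 := by
        have h3 := mul_le_mul_of_nonneg_left hineq hCpos.le
        have h4 : C * (‖u‖ ^ 2 + 2 * (C⁻¹ * ⟪u, g⟫)) = C * ‖u‖ ^ 2 + 2 * ⟪u, g⟫ := by
          field_simp
        rw [h4, mul_zero] at h3
        exact h3
      have hxv : v = x + u := by rw [hudef]; abel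
      have hBexp : B v v = B x x + B x u + B u x + B u u := by
        rw [hxv]
        simp only [map_add, LinearMap.add_apply]
        ring
      rw [hBexp, hsymm u x, ← hg u, hBx]
      have h5 := hquad u
      have h6 : ⟪g, u⟫ = ⟪u, g⟫ := real_inner_comm _ _
      rw [h6]
      linarith
  · -- reverse direction
    rintro ⟨c, ρ, hρ, hdist, hD⟩
    have hdx : ‖x - c‖ = ρ := by rw [← dist_eq_norm]; exact hdist
    have hx0 : x ≠ 0 := by
      intro h
      rw [h, (hN0 0).mpr rfl] at hx
      norm_num at hx
    by_cases hcase : (1:ℝ) * ⟪ρ⁻¹ • (x - (1:ℝ) • c), c⟫ + ρ ≠ 0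
    · exact aux_ellipse N hNs hNt x c ρ hρ hD 1 (by norm_num)
        (by simpa using hdx) hcase
    · push_neg at hcase
      have hip : ⟪x - c, c⟫ = -ρ^2 := by
        rw [one_smul, real_inner_smul_left, one_mul] at hcase
        have : ρ⁻¹ * ⟪x - c, c⟫ = -ρ := by linarith
        have h2 := congrArg (fun t => ρ * t) this
        rw [← mul_assoc, mul_inv_cancel₀ hρ.ne', one_mul] at h2
        rw [h2]; ring
      have hc0 : c ≠ 0 := by
        intro h
        rw [h, inner_zero_right] at hip
        nlinarith
      set d2 : ℝ := ‖c‖ ^ 2 with hd2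
      have hd2pos : 0 < d2 := by rw [hd2]; exact pow_pos (norm_pos_iff.mpr hc0) 2
      have hxc : ⟪x, c⟫ = d2 - ρ ^ 2 := by
        rw [inner_sub_left, real_inner_self_eq_norm_sq] at hip
        rw [hd2]; linarith
      have hx2 : ‖x‖ ^ 2 = d2 - ρ ^ 2 := by
        have h1 : ‖x - c‖ ^ 2 = ρ ^ 2 := by rw [hdx]
        rw [norm_sub_sq_real, hxc] at h1
        rw [hd2] at *
        linarith
      have hd2ρ : ρ ^ 2 < d2 := by
        have : 0 < ‖x‖ ^ 2 := pow_pos (norm_pos_iff.mpr hx0) 2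
        linarith
      set s₁ : ℝ := (d2 - 2 * ρ ^ 2) / d2 with hs₁
      have hs₁abs : |s₁| ≤ 1 := by
        rw [abs_le]
        constructor
        · rw [hs₁, le_div_iff₀ hd2pos]; nlinarith
        · rw [hs₁, div_le_one hd2pos]; nlinarith
      have hxs₁ : ‖x - s₁ • c‖ = ρ := by
        have hsq : ‖x - s₁ • c‖ ^ 2 = ρ ^ 2 := by
          rw [norm_sub_sq_real, real_inner_smul_right, norm_smul, mul_pow, Real.norm_eq_abs,
            sq_abs, hxc, hx2, ← hd2, hs₁]
          field_simp [hd2pos.ne']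
          ring
        calc ‖x - s₁ • c‖ = Real.sqrt (‖x - s₁ • c‖ ^ 2) := (Real.sqrt_sq (norm_nonneg _)).symm
          _ = Real.sqrt (ρ ^ 2) := by rw [hsq]
          _ = ρ := Real.sqrt_sq hρ.le
      have hiden : s₁ * ⟪ρ⁻¹ • (x - s₁ • c), c⟫ + ρ ≠ 0 := by
        have hval : ⟪ρ⁻¹ • (x - s₁ • c), c⟫ = ρ := by
          rw [real_inner_smul_left, inner_sub_left, real_inner_smul_left,
            real_inner_self_eq_norm_sq, ← hd2, hxc, hs₁]
          field_simp [hd2pos.ne', hρ.ne']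
          ring
        rw [hval]
        have hs₁gt : -1 < s₁ := by
          rw [hs₁, lt_div_iff₀ hd2pos]; nlinarith
        have : 0 < s₁ * ρ + ρ := by nlinarith
        linarith [this]
      exact aux_ellipse N hNs hNt x c ρ hρ hD s₁ hs₁abs hxs₁ hiden
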